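/- As m → ∞, the sum ∑_{i=1}^{m-1} 1/sin(iπ/m) equals (2/π) m ln m + o(m ln m). -/

import Mathlib

open Real Finset Asymptotics Filter

/-- On `(0, π/2]`, `1/x ≤ 1/sin x ≤ 1/x + 1`. -/
lemma aux_inv_sin_bounds {x : ℝ} (hx : 0 < x) (hx2 : x ≤ π / 2) :
    1 / x ≤ 1 / Real.sin x ∧ 1 / Real.sin x ≤ 1 / x + 1 := by
  have hxpi : x < π := lt_of_le_of_lt hx2 (by linarith [Real.pi_pos])
  have hs : 0 < Real.sin x := Real.sin_pos_of_pos_of_lt_pi hx hxpi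
  have hsx : Real.sin x < x := Real.sin_lt hx
  have hjordan : 2 / π * x ≤ Real.sin x := Real.mul_le_sin hx.le hx2
  have hpi : (3.1415 : ℝ) < π := by
    have := Real.pi_gt_d6; linarith
  have hpi' : π < 3.15 := Real.pi_lt_d2
  constructor
  · exact one_div_le_one_div_of_le hs hsx.le
  · have key : x - Real.sin x ≤ x * Real.sin x := by
      rcases le_or_gt x 1 with h1 | h1
      · have hcube := Real.sin_gt_sub_cube hx
        nlinarith [sq_nonneg x, mul_pos hx hx]
      · have hj2 : 2 * x ≤ π * Real.sin x := by
          rw [div_mul_eq_mul_div, div_le_iff₀ Real.pi_pos] at hjordan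
          linarith
        have hps : π * Real.sin x < 3.15 * Real.sin x :=
          mul_lt_mul_of_pos_right hpi' hs
        have hxs : 0 ≤ (x - 1) * Real.sin x :=
          mul_nonneg (by linarith) hs.le
        nlinarith
    have : 1 / Real.sin x - 1 / x ≤ 1 := by
      rw [div_sub_div _ _ hs.ne' hx.ne', div_le_one (by positivity)]
      nlinarith
    linarith

/-- Per-term bound, case `2 i ≤ m`. -/
lemma aux_key (m i : ℕ) (hm : 2 ≤ m) (h1 : 1 ≤ i) (h2 : 2 * i ≤ m) :
    |1 / Real.sin ((i : ℝ) * π / m) - (m / π) * (1 / (i : ℝ) + 1 / ((m : ℝ) - i))| ≤ 1 := by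
  have hpi : (0 : ℝ) < π := Real.pi_pos
  have hm0 : (0 : ℝ) < m := by positivity
  have hi0 : (0 : ℝ) < i := by exact_mod_cast h1
  have h2' : 2 * (i : ℝ) ≤ m := by exact_mod_cast h2
  set x : ℝ := (i : ℝ) * π / m with hxdef
  have hx : 0 < x := by positivity
  have hx2 : x ≤ π / 2 := by
    rw [hxdef, div_le_div_iff₀ hm0 two_pos]
    nlinarith
  obtain ⟨hlo, hhi⟩ := aux_inv_sin_bounds hx hx2
  have hxinv : 1 / x = (m / π) * (1 / (i : ℝ)) := by
    rw [hxdef]; field_simp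
  have hmi : (0 : ℝ) < (m : ℝ) - i := by linarith
  have htail : 0 < (m / π) * (1 / ((m : ℝ) - i)) := by positivity
  have htail2 : (m / π) * (1 / ((m : ℝ) - i)) ≤ 2 / π := by
    rw [div_mul_eq_mul_div, mul_one_div, div_div, div_le_div_iff₀ (by positivity) (by positivity)]
    nlinarith
  have h2pi : (2 : ℝ) / π ≤ 1 := by
    rw [div_le_one hpi]
    linarith [Real.pi_gt_d6]
  rw [abs_le]
  constructor <;> nlinarith [hlo, hhi]

/-- Per-term bound, all `i ∈ [1, m-1]`. -/
lemma aux_term (m i : ℕ) (hm : 2 ≤ m) (hi : i ∈ Finset.Icc 1 (m - 1)) :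
    |1 / Real.sin ((i : ℝ) * π / m) - (m / π) * (1 / (i : ℝ) + 1 / ((m : ℝ) - i))| ≤ 1 := by
  rw [Finset.mem_Icc] at hi
  obtain ⟨hi1, hi2⟩ := hi
  have him : i ≤ m - 1 := hi2
  have him' : i < m := lt_of_le_of_lt him (Nat.sub_lt (by omega) one_pos)
  rcases le_or_gt (2 * i) m with h | h
  · exact aux_key m i hm hi1 h
  · -- use symmetry with j = m - i
    set j := m - i with hjdef
    have hj1 : 1 ≤ j := by omega
    have hj2 : 2 * j ≤ m := by omega
    have hcast : ((j : ℕ) : ℝ) = (m : ℝ) - i := by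
      rw [hjdef]; push_cast [Nat.cast_sub him'.le]; ring
    have hsin : Real.sin ((i : ℝ) * π / m) = Real.sin ((j : ℝ) * π / m) := by
      rw [hcast]
      rw [show ((m : ℝ) - i) * π / m = π - (i : ℝ) * π / m by
        field_simp]
      rw [Real.sin_pi_sub]
    have hsym : (m / π) * (1 / (i : ℝ) + 1 / ((m : ℝ) - i))
        = (m / π) * (1 / (j : ℝ) + 1 / ((m : ℝ) - j)) := by
      rw [hcast]
      have : (m : ℝ) - ((m : ℝ) - i) = i := by ring
      rw [this]
      ring
    rw [hsin, hsym]
    exact aux_key m j hm hj1 hj2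

/-- Reflection for the second partial fraction sum. -/
lemma aux_reflect (m : ℕ) :
    ∑ i ∈ Finset.Icc 1 (m - 1), (1 : ℝ) / ((m : ℝ) - i)
      = ∑ i ∈ Finset.Icc 1 (m - 1), 1 / (i : ℝ) := by
  rcases Nat.eq_zero_or_pos m with rfl | hm
  · simp
  refine Finset.sum_nbij' (fun i => m - i) (fun i => m - i) ?_ ?_ ?_ ?_ ?_
  · intro a ha
    simp only [Finset.mem_Icc] at ha ⊢
    omega
  · intro a ha
    simp only [Finset.mem_Icc] at ha ⊢
    omega
  · intro a ha
    simp only [Finset.mem_Icc] at ha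
    show m - (m - a) = a
    omega
  · intro a ha
    simp only [Finset.mem_Icc] at ha
    show m - (m - a) = a
    omega
  · intro a ha
    simp only [Finset.mem_Icc] at ha
    have : ((m - a : ℕ) : ℝ) = (m : ℝ) - a := by
      push_cast [Nat.cast_sub (by omega : a ≤ m)]; ring
    rw [this]

lemma aux_harmonic (m : ℕ) (hm : 2 ≤ m) :
    |(∑ i ∈ Finset.Icc 1 (m - 1), 1 / (i : ℝ)) - Real.log m| ≤ 1 := by
  have hH : (∑ i ∈ Finset.Icc 1 (m - 1), 1 / (i : ℝ)) = (harmonic (m - 1) : ℝ) := by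
    rw [harmonic_eq_sum_Icc]
    push_cast
    simp [one_div]
  have h1 : Real.log m ≤ (harmonic (m - 1) : ℝ) := by
    have := log_add_one_le_harmonic (m - 1)
    rwa [show m - 1 + 1 = m from by omega] at this
  have h2 : (harmonic (m - 1) : ℝ) ≤ 1 + Real.log (m - 1 : ℕ) := harmonic_le_one_add_log _
  have h3 : Real.log ((m - 1 : ℕ) : ℝ) ≤ Real.log m := by
    apply Real.log_le_log (by exact_mod_cast (by omega : 0 < m - 1))
    exact_mod_cast Nat.sub_le m 1
  rw [hH, abs_le]
  constructor <;> linarith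

lemma aux_bound (m : ℕ) (hm : 2 ≤ m) :
    |(∑ i ∈ Finset.Icc 1 (m - 1), 1 / Real.sin ((i : ℝ) * π / m))
        - (2 / π) * (m : ℝ) * Real.log m| ≤ 2 * m := by
  have hpi : (0 : ℝ) < π := Real.pi_pos
  have hm0 : (0 : ℝ) < m := by positivity
  set b : ℕ → ℝ := fun i => (m / π) * (1 / (i : ℝ) + 1 / ((m : ℝ) - i)) with hb
  set H : ℝ := ∑ i ∈ Finset.Icc 1 (m - 1), 1 / (i : ℝ) with hHdef
  have hsumb : ∑ i ∈ Finset.Icc 1 (m - 1), b i = (2 * m / π) * H := by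
    rw [hb]
    simp only [mul_add, Finset.sum_add_distrib, ← Finset.mul_sum]
    rw [aux_reflect m, hHdef]
    ring
  have hterm : |(∑ i ∈ Finset.Icc 1 (m - 1), 1 / Real.sin ((i : ℝ) * π / m))
      - ∑ i ∈ Finset.Icc 1 (m - 1), b i| ≤ m := by
    rw [← Finset.sum_sub_distrib]
    calc |∑ i ∈ Finset.Icc 1 (m - 1), (1 / Real.sin ((i : ℝ) * π / m) - b i)|
        ≤ ∑ i ∈ Finset.Icc 1 (m - 1), |1 / Real.sin ((i : ℝ) * π / m) - b i| :=
          Finset.abs_sum_le_sum_abs _ _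
      _ ≤ ∑ i ∈ Finset.Icc 1 (m - 1), 1 := by
          exact Finset.sum_le_sum fun i hi => aux_term m i hm hi
      _ = ((m - 1 : ℕ) : ℝ) := by simp
      _ ≤ m := by exact_mod_cast Nat.sub_le m 1
  have hharm := aux_harmonic m hm
  have h2pim : (2 * m / π) ≤ m := by
    rw [div_le_iff₀ hpi]
    nlinarith [Real.pi_gt_d6]
  have hkey : |(2 * m / π) * H - (2 / π) * (m : ℝ) * Real.log m| ≤ m := by
    have : (2 * m / π) * H - (2 / π) * (m : ℝ) * Real.log m
        = (2 * m / π) * (H - Real.log m) := by ring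
    rw [this, abs_mul, abs_of_nonneg (by positivity)]
    calc (2 * m / π) * |H - Real.log m| ≤ (2 * m / π) * 1 := by
          apply mul_le_mul_of_nonneg_left hharm (by positivity)
      _ ≤ m := by linarith
  calc |(∑ i ∈ Finset.Icc 1 (m - 1), 1 / Real.sin ((i : ℝ) * π / m))
        - (2 / π) * (m : ℝ) * Real.log m|
      ≤ |(∑ i ∈ Finset.Icc 1 (m - 1), 1 / Real.sin ((i : ℝ) * π / m))
          - ∑ i ∈ Finset.Icc 1 (m - 1), b i|
        + |(∑ i ∈ Finset.Icc 1 (m - 1), b i) - (2 / π) * (m : ℝ) * Real.log m| := by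
          exact abs_sub_le _ _ _
    _ ≤ m + m := by
        rw [← hsumb] at hkey
        exact add_le_add hterm hkey
    _ = 2 * m := by ring

theorem stmt2 :
    (fun m : ℕ => (∑ i ∈ Finset.Icc 1 (m - 1), 1 / Real.sin ((i : ℝ) * Real.pi / m))
        - (2 / Real.pi) * (m : ℝ) * Real.log m)
      =o[Filter.atTop] (fun m : ℕ => (m : ℝ) * Real.log m) := by
  have hO : (fun m : ℕ => (∑ i ∈ Finset.Icc 1 (m - 1), 1 / Real.sin ((i : ℝ) * Real.pi / m))
        - (2 / Real.pi) * (m : ℝ) * Real.log m) =O[atTop] (fun m : ℕ => (m : ℝ)) := by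
    rw [isBigO_iff]
    refine ⟨2, ?_⟩
    filter_upwards [eventually_ge_atTop 2] with m hm
    rw [Real.norm_eq_abs, Real.norm_eq_abs]
    calc |(∑ i ∈ Finset.Icc 1 (m - 1), 1 / Real.sin ((i : ℝ) * Real.pi / m))
        - (2 / Real.pi) * (m : ℝ) * Real.log m| ≤ 2 * m := aux_bound m hm
      _ ≤ 2 * |(m : ℝ)| := by
          have : (0 : ℝ) ≤ m := by positivity
          rw [abs_of_nonneg this]
  have hlog : Tendsto (fun m : ℕ => Real.log m) atTop atTop :=
    Real.tendsto_log_atTop.comp tendsto_natCast_atTop_atTop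
  have ho1 : (fun _ : ℕ => (1 : ℝ)) =o[atTop] (fun m : ℕ => Real.log m) := by
    rw [isLittleO_const_left]
    right
    exact tendsto_abs_atTop_atTop.comp hlog
  have ho : (fun m : ℕ => (m : ℝ)) =o[atTop] (fun m : ℕ => (m : ℝ) * Real.log m) := by
    have := (isBigO_refl (fun m : ℕ => (m : ℝ)) atTop).mul_isLittleO ho1
    simpa using this
  exact hO.trans_isLittleO ho
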